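/- Claim (i) in the proof of Lemma 3.1: let f : ℝ^d → ℝ be smooth with compact support and set p := π·e^f. Define L̃*p := −∇·(p ∇ log π) + Δp. Then ∫_{ℝ^d} Γ₂(f,f)(x) p(x) dx = ∫_{ℝ^d} L̃f(x)·L̃*p(x) dx + ½ ∫_{ℝ^d} Γ₁(f,f)(x)·L̃*p(x) dx. -/

import Mathlib

open MeasureTheory
open scoped BigOperators

noncomputable section

/-- `i`-th partial derivative of `f` at `x`, in the coordinate direction `i`. -/
def pderiv' {d : ℕ} (f : EuclideanSpace ℝ (Fin d) → ℝ) (i : Fin d)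
    (x : EuclideanSpace ℝ (Fin d)) : ℝ :=
  fderiv ℝ f x (EuclideanSpace.single i 1)

/-- second partial derivative `∂_i ∂_j f` at `x`. -/
def pderiv2 {d : ℕ} (f : EuclideanSpace ℝ (Fin d) → ℝ) (i j : Fin d)
    (x : EuclideanSpace ℝ (Fin d)) : ℝ :=
  pderiv' (fun y => pderiv' f j y) i x

/-- Laplacian `Δf`. -/
def lap {d : ℕ} (f : EuclideanSpace ℝ (Fin d) → ℝ) (x : EuclideanSpace ℝ (Fin d)) : ℝ :=
  ∑ i, pderiv2 f i i x

/-- carré du champ `Γ₁(g,h) = ⟨∇g, ∇h⟩`. -/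
def Gamma1 {d : ℕ} (g h : EuclideanSpace ℝ (Fin d) → ℝ) (x : EuclideanSpace ℝ (Fin d)) : ℝ :=
  ∑ i, pderiv' g i x * pderiv' h i x

/-- generator `L̃ h = ⟨∇ log π, ∇h⟩ + Δh`. -/
def genL {d : ℕ} (π h : EuclideanSpace ℝ (Fin d) → ℝ) (x : EuclideanSpace ℝ (Fin d)) : ℝ :=
  Gamma1 (fun y => Real.log (π y)) h x + lap h x

/-- Gamma two operator `Γ₂(f,f) = ½ L̃ Γ₁(f,f) − Γ₁(L̃f, f)`. -/
def Gamma2 {d : ℕ} (π f : EuclideanSpace ℝ (Fin d) → ℝ) (x : EuclideanSpace ℝ (Fin d)) : ℝ :=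
  (1/2 : ℝ) * genL π (fun y => Gamma1 f f y) x - Gamma1 (fun y => genL π f y) f x

/-- information Gamma operator `Γ_I(f,f) = −½⟨γ, ∇Γ₁(f,f)⟩ + (L̃f)·⟨∇f, γ⟩`. -/
def GammaI {d : ℕ} (π : EuclideanSpace ℝ (Fin d) → ℝ)
    (γ : EuclideanSpace ℝ (Fin d) → EuclideanSpace ℝ (Fin d))
    (f : EuclideanSpace ℝ (Fin d) → ℝ) (x : EuclideanSpace ℝ (Fin d)) : ℝ :=
  -(1/2 : ℝ) * (∑ i, γ x i * pderiv' (fun y => Gamma1 f f y) i x)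
    + genL π f x * (∑ i, pderiv' f i x * γ x i)

/-- the tensor `ℜ` of the paper:
`ℜ_{ij} = −∂²_{ij} log π + ((3−2d)/8) γ_i γ_j − (1/8) δ_{ij} Σ_k γ_k²
          + ½(γ_i ∂_j log π + γ_j ∂_i log π)`. -/
def Rtensor {d : ℕ} (π : EuclideanSpace ℝ (Fin d) → ℝ)
    (γ : EuclideanSpace ℝ (Fin d) → EuclideanSpace ℝ (Fin d))
    (i j : Fin d) (x : EuclideanSpace ℝ (Fin d)) : ℝ :=
  -pderiv2 (fun y => Real.log (π y)) i j x
    + ((3 - 2 * (d : ℝ)) / 8) * γ x i * γ x j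
    - (1/8 : ℝ) * (if i = j then ∑ k, (γ x k) ^ 2 else 0)
    + (1/2 : ℝ) * (γ x i * pderiv' (fun y => Real.log (π y)) j x
        + γ x j * pderiv' (fun y => Real.log (π y)) i x)

/-- the modified Hessian matrix `𝔥ess f`. -/
def hessM {d : ℕ} (γ : EuclideanSpace ℝ (Fin d) → EuclideanSpace ℝ (Fin d))
    (f : EuclideanSpace ℝ (Fin d) → ℝ) (i j : Fin d) (x : EuclideanSpace ℝ (Fin d)) : ℝ :=
  if i = j then
    pderiv2 f i i x + (1/2 : ℝ) * (∑ k, γ x k * pderiv' f k x)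
      - (1/2 : ℝ) * γ x i * pderiv' f i x
  else
    pderiv2 f i j x - (1/4 : ℝ) * (γ x i * pderiv' f j x + γ x j * pderiv' f i x)

/-- right-hand side of the Fokker–Planck equation `−∇·(p b) + Δp` with drift
`b = ∇ log π − γ`, evaluated at a density `p`. -/
def FPrhs {d : ℕ} (π : EuclideanSpace ℝ (Fin d) → ℝ)
    (γ : EuclideanSpace ℝ (Fin d) → EuclideanSpace ℝ (Fin d))
    (p : EuclideanSpace ℝ (Fin d) → ℝ) (x : EuclideanSpace ℝ (Fin d)) : ℝ :=
  -(∑ i, pderiv' (fun y => p y * (pderiv' (fun z => Real.log (π z)) i y - γ y i)) i x)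
    + lap p x

/-- `L̃* p = −∇·(p ∇ log π) + Δp`. -/
def Ltilstar {d : ℕ} (π p : EuclideanSpace ℝ (Fin d) → ℝ)
    (x : EuclideanSpace ℝ (Fin d)) : ℝ :=
  -(∑ i, pderiv' (fun y => p y * pderiv' (fun z => Real.log (π z)) i y) i x) + lap p x

/-- Arnold–Carlen tensor `(ℜ_AC)_{ij} = −∂²_{ij} log π − ½(∂_i γ_j + ∂_j γ_i)`. -/
def RAC {d : ℕ} (π : EuclideanSpace ℝ (Fin d) → ℝ)
    (γ : EuclideanSpace ℝ (Fin d) → EuclideanSpace ℝ (Fin d))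
    (i j : Fin d) (x : EuclideanSpace ℝ (Fin d)) : ℝ :=
  -pderiv2 (fun y => Real.log (π y)) i j x
    - (1/2 : ℝ) * (pderiv' (fun y => γ y j) i x + pderiv' (fun y => γ y i) j x)


namespace ClaimAux

open Metric Filter

variable {d : ℕ}

local notation "𝕏" => EuclideanSpace ℝ (Fin d)

lemma pderiv'_eq_zero_of_nmem {g : 𝕏 → ℝ} {x : 𝕏} (hx : x ∉ tsupport g) (i : Fin d) :
    pderiv' g i x = 0 := by
  have h : g =ᶠ[nhds x] 0 := notMem_tsupport_iff_eventuallyEq.mp hx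
  rw [pderiv', h.fderiv_eq]
  have : fderiv ℝ (fun _ : 𝕏 => (0:ℝ)) x = 0 := fderiv_const_apply 0
  rw [show (0 : 𝕏 → ℝ) = (fun _ : 𝕏 => (0:ℝ)) from rfl, this]
  rfl

lemma tsupport_pderiv'_subset (g : 𝕏 → ℝ) (i : Fin d) :
    tsupport (pderiv' g i) ⊆ tsupport g := by
  apply closure_minimal ?_ (isClosed_tsupport g)
  intro x hx
  by_contra h
  exact hx (pderiv'_eq_zero_of_nmem h i)

lemma pderiv2_eq_zero_of_nmem {g : 𝕏 → ℝ} {x : 𝕏} (hx : x ∉ tsupport g) (i j : Fin d) :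
    pderiv2 g i j x = 0 :=
  pderiv'_eq_zero_of_nmem (fun h => hx (tsupport_pderiv'_subset g j h)) i

lemma hcs_pderiv' {g : 𝕏 → ℝ} (hg : HasCompactSupport g) (i : Fin d) :
    HasCompactSupport (pderiv' g i) :=
  IsCompact.of_isClosed_subset hg (isClosed_tsupport _) (tsupport_pderiv'_subset g i)

lemma contDiff_pderiv' {g : 𝕏 → ℝ} (hg : ContDiff ℝ (⊤:ℕ∞) g) (i : Fin d) :
    ContDiff ℝ (⊤:ℕ∞) (pderiv' g i) :=
  (hg.fderiv_right (mod_cast le_top)).clm_apply contDiff_const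

lemma contDiff_pderiv2 {g : 𝕏 → ℝ} (hg : ContDiff ℝ (⊤:ℕ∞) g) (i j : Fin d) :
    ContDiff ℝ (⊤:ℕ∞) (pderiv2 g i j) :=
  contDiff_pderiv' (contDiff_pderiv' hg j) i

lemma contDiff_gamma1 {g h : 𝕏 → ℝ} (hg : ContDiff ℝ (⊤:ℕ∞) g) (hh : ContDiff ℝ (⊤:ℕ∞) h) :
    ContDiff ℝ (⊤:ℕ∞) (Gamma1 g h) :=
  ContDiff.sum fun i _ => (contDiff_pderiv' hg i).mul (contDiff_pderiv' hh i)

lemma contDiff_lap {g : 𝕏 → ℝ} (hg : ContDiff ℝ (⊤:ℕ∞) g) :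
    ContDiff ℝ (⊤:ℕ∞) (lap g) :=
  ContDiff.sum fun i _ => contDiff_pderiv2 hg i i

lemma contDiff_genL {π g : 𝕏 → ℝ} (hπ : ContDiff ℝ (⊤:ℕ∞) π) (hπpos : ∀ x, 0 < π x)
    (hg : ContDiff ℝ (⊤:ℕ∞) g) : ContDiff ℝ (⊤:ℕ∞) (genL π g) :=
  (contDiff_gamma1 (hπ.log fun x => (hπpos x).ne') hg).add (contDiff_lap hg)

lemma pderiv'_sub {a b : 𝕏 → ℝ} (ha : ContDiff ℝ (⊤:ℕ∞) a) (hb : ContDiff ℝ (⊤:ℕ∞) b)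
    (i : Fin d) (x : 𝕏) :
    pderiv' (fun y => a y - b y) i x = pderiv' a i x - pderiv' b i x := by
  have h := fderiv_fun_sub (ha.differentiable (by simp) x)
    (hb.differentiable (by simp) x)
  simp [pderiv', h]

lemma integ_mul' {a b : 𝕏 → ℝ} (ha : Continuous a) (hb : Continuous b)
    (hcs : HasCompactSupport b) : MeasureTheory.Integrable (fun x => a x * b x) :=
  (ha.mul hb).integrable_of_hasCompactSupport hcs.mul_left

lemma integ_mul {a b : 𝕏 → ℝ} (ha : Continuous a) (hb : Continuous b)
    (hcs : HasCompactSupport a) : MeasureTheory.Integrable (fun x => a x * b x) :=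
  (ha.mul hb).integrable_of_hasCompactSupport hcs.mul_right

/-- integration by parts -/
lemma ibp {u v : 𝕏 → ℝ} (hu : ContDiff ℝ (⊤:ℕ∞) u) (hcu : HasCompactSupport u)
    (hv : ContDiff ℝ (⊤:ℕ∞) v) (i : Fin d) :
    ∫ x, pderiv' v i x * u x = - ∫ x, pderiv' u i x * v x := by
  obtain ⟨r, hr⟩ := hcu.isBounded.subset_ball (0 : 𝕏)
  set R : ℝ := max r 1 with hR
  have hRpos : 0 < R := lt_of_lt_of_le one_pos (le_max_right _ _)
  have hsub : tsupport u ⊆ ball (0:𝕏) R := hr.trans (ball_subset_ball (le_max_left _ _))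
  set χ : ContDiffBump (0:𝕏) := ⟨R, R+1, hRpos, lt_add_one R⟩ with hχ
  set F : 𝕏 → ℝ := fun y => χ y * v y with hF
  have hχ1 : ∀ y ∈ ball (0:𝕏) R, χ y = 1 := fun y hy =>
    χ.one_of_mem_closedBall (ball_subset_closedBall hy)
  have hFsm : ContDiff ℝ (⊤:ℕ∞) F := χ.contDiff.mul hv
  have hFcs : HasCompactSupport F := χ.hasCompactSupport.mul_right
  obtain ⟨C, hC⟩ := ContDiff.lipschitzWith_of_hasCompactSupport hFcs hFsm (by simp)
  obtain ⟨D, hD⟩ := ContDiff.lipschitzWith_of_hasCompactSupport hcu hu (by simp)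
  have key := LipschitzWith.integral_lineDeriv_mul_eq (μ := MeasureTheory.volume) hC hD hcu
    (EuclideanSpace.single i 1)
  have l1 : ∀ x, lineDeriv ℝ F x (EuclideanSpace.single i 1) * u x = pderiv' v i x * u x := by
    intro x
    by_cases hx : x ∈ tsupport u
    · have hev : F =ᶠ[nhds x] v := by
        filter_upwards [isOpen_ball.mem_nhds (hsub hx)] with y hy
        simp [hF, hχ1 y hy]
      rw [(hFsm.differentiable (by simp) x).lineDeriv_eq_fderiv, hev.fderiv_eq]
      rfl
    · simp [image_eq_zero_of_notMem_tsupport hx]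
  have r1 : ∀ x, lineDeriv ℝ u x (-(EuclideanSpace.single i 1)) * F x
      = -(pderiv' u i x * v x) := by
    intro x
    rw [(hu.differentiable (by simp) x).lineDeriv_eq_fderiv, map_neg]
    by_cases hx : x ∈ tsupport u
    · have h1 : χ x = 1 := hχ1 x (hsub hx)
      simp [hF, h1, pderiv']
    · have h0 : pderiv' u i x = 0 := pderiv'_eq_zero_of_nmem hx i
      rw [pderiv'] at h0
      simp [pderiv', h0]
  simp only [l1, r1] at key
  rw [key, MeasureTheory.integral_neg]

lemma ibp' {u v : 𝕏 → ℝ} (hu : ContDiff ℝ (⊤:ℕ∞) u) (hcu : HasCompactSupport u)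
    (hv : ContDiff ℝ (⊤:ℕ∞) v) (i : Fin d) :
    ∫ x, pderiv' u i x * v x = - ∫ x, pderiv' v i x * u x := by
  rw [ibp hu hcu hv i, neg_neg]

end ClaimAux

open ClaimAux

/-- Claim (i) in the proof of Lemma 3.1:
`∫ Γ₂(f,f) p = ∫ L̃f · L̃*p + ½ ∫ Γ₁(f,f) · L̃*p` where `p = π e^f`. -/
theorem claim_i_gamma_two_weak
    (d : ℕ) (hd : 1 ≤ d)
    (π : EuclideanSpace ℝ (Fin d) → ℝ) (hπ : ContDiff ℝ (⊤ : ℕ∞) π)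
    (hπpos : ∀ x, 0 < π x)
    (f : EuclideanSpace ℝ (Fin d) → ℝ) (hf : ContDiff ℝ (⊤ : ℕ∞) f)
    (hfc : HasCompactSupport f) :
    ∫ x, Gamma2 π f x * (π x * Real.exp (f x)) =
      (∫ x, genL π f x * Ltilstar π (fun y => π y * Real.exp (f y)) x)
        + (1/2 : ℝ) * ∫ x, Gamma1 f f x * Ltilstar π (fun y => π y * Real.exp (f y)) x := by
  have hLπ : ContDiff ℝ (⊤:ℕ∞) (fun z => Real.log (π z)) := hπ.log fun x => (hπpos x).ne'
  set P : EuclideanSpace ℝ (Fin d) → ℝ := fun y => π y * Real.exp (f y) with hPdef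
  have hPsm : ContDiff ℝ (⊤:ℕ∞) P := hπ.mul (Real.contDiff_exp.comp hf)
  have hPpos : ∀ x, 0 < P x := fun x => mul_pos (hπpos x) (Real.exp_pos _)
  have hPd : Differentiable ℝ P := hPsm.differentiable (by simp)
  -- pointwise: P·∂ᵢf = ∂ᵢP − P·∂ᵢ log π
  have hfd : ∀ (i : Fin d) (y : EuclideanSpace ℝ (Fin d)), P y * pderiv' f i y
      = pderiv' P i y - P y * pderiv' (fun z => Real.log (π z)) i y := by
    intro i y
    have hπ' : HasFDerivAt π (fderiv ℝ π y) y :=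
      (hπ.differentiable (by simp) y).hasFDerivAt
    have hP' : HasFDerivAt P (fderiv ℝ P y) y := (hPd y).hasFDerivAt
    have hlogP : HasFDerivAt (fun z => Real.log (P z)) ((P y)⁻¹ • fderiv ℝ P y) y :=
      hP'.log (hPpos y).ne'
    have hlogπ : HasFDerivAt (fun z => Real.log (π z)) ((π y)⁻¹ • fderiv ℝ π y) y :=
      hπ'.log (hπpos y).ne'
    have hfeq : f = fun z => Real.log (P z) - Real.log (π z) := by
      funext z
      simp only [hPdef]
      rw [Real.log_mul (hπpos z).ne' (Real.exp_ne_zero _), Real.log_exp]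
      ring
    have hf' : HasFDerivAt f ((P y)⁻¹ • fderiv ℝ P y - (π y)⁻¹ • fderiv ℝ π y) y := by
      rw [hfeq]; exact hlogP.sub hlogπ
    have e1 : pderiv' f i y = (P y)⁻¹ * pderiv' P i y - (π y)⁻¹ * pderiv' π i y := by
      rw [pderiv', hf'.fderiv]; simp [pderiv']
    have e2 : pderiv' (fun z => Real.log (π z)) i y = (π y)⁻¹ * pderiv' π i y := by
      rw [pderiv', hlogπ.fderiv]; simp [pderiv']
    have hP0 : P y ≠ 0 := (hPpos y).ne'
    rw [e1, e2, mul_sub, ← mul_assoc, mul_inv_cancel₀ hP0, one_mul]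
  -- compact support facts
  have hGcs : HasCompactSupport (fun y => Gamma1 f f y) :=
    HasCompactSupport.intro hfc fun x hx => by
      simp [Gamma1, pderiv'_eq_zero_of_nmem hx]
  have hGsm : ContDiff ℝ (⊤:ℕ∞) (fun y => Gamma1 f f y) := contDiff_gamma1 hf hf
  have hLfcs : HasCompactSupport (fun y => genL π f y) :=
    HasCompactSupport.intro hfc fun x hx => by
      simp [genL, Gamma1, lap, pderiv'_eq_zero_of_nmem hx, pderiv2_eq_zero_of_nmem hx]
  have hLfsm : ContDiff ℝ (⊤:ℕ∞) (fun y => genL π f y) := contDiff_genL hπ hπpos hf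
  -- Lemma A : L̃*P = ∑ᵢ ∂ᵢ(P ∂ᵢ f)
  have lemA : ∀ x, Ltilstar π P x = ∑ i, pderiv' (fun y => P y * pderiv' f i y) i x := by
    intro x
    have h1 : ∀ i : Fin d, pderiv' (fun y => P y * pderiv' f i y) i x
        = pderiv2 P i i x
          - pderiv' (fun y => P y * pderiv' (fun z => Real.log (π z)) i y) i x := by
      intro i
      have hfun : (fun y => P y * pderiv' f i y)
          = fun y => pderiv' P i y - P y * pderiv' (fun z => Real.log (π z)) i y := by
        funext y; exact hfd i y
      rw [hfun]
      exact pderiv'_sub (contDiff_pderiv' hPsm i) (hPsm.mul (contDiff_pderiv' hLπ i)) i x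
    rw [Finset.sum_congr rfl fun i _ => h1 i, Finset.sum_sub_distrib]
    simp only [Ltilstar, lap]
    ring
  -- adjoint identity : ∫ (L̃h)·P = ∫ h·(L̃*P) for compactly supported smooth h
  have adj : ∀ h : EuclideanSpace ℝ (Fin d) → ℝ, ContDiff ℝ (⊤:ℕ∞) h → HasCompactSupport h →
      ∫ x, genL π h x * P x = ∫ x, h x * Ltilstar π P x := by
    intro h hh hch
    have int1 : ∀ i : Fin d, MeasureTheory.Integrable
        (fun x => pderiv' h i x * (P x * pderiv' (fun z => Real.log (π z)) i x)) :=
      fun i => integ_mul (contDiff_pderiv' hh i).continuous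
        (hPsm.continuous.mul (contDiff_pderiv' hLπ i).continuous) (hcs_pderiv' hch i)
    have int2 : ∀ i : Fin d, MeasureTheory.Integrable (fun x => pderiv2 h i i x * P x) :=
      fun i => integ_mul (contDiff_pderiv2 hh i i).continuous hPsm.continuous
        (hcs_pderiv' (hcs_pderiv' hch i) i)
    have intA : ∀ i : Fin d, MeasureTheory.Integrable (fun x => pderiv2 P i i x * h x) :=
      fun i => integ_mul' (contDiff_pderiv2 hPsm i i).continuous hh.continuous hch
    have intB : ∀ i : Fin d, MeasureTheory.Integrable
        (fun x => pderiv' (fun y => P y * pderiv' (fun z => Real.log (π z)) i y) i x * h x) :=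
      fun i => integ_mul' (contDiff_pderiv' (hPsm.mul (contDiff_pderiv' hLπ i)) i).continuous
        hh.continuous hch
    have intH : ∀ i : Fin d, MeasureTheory.Integrable (fun x => h x *
        (pderiv2 P i i x
          - pderiv' (fun y => P y * pderiv' (fun z => Real.log (π z)) i y) i x)) :=
      fun i => by
        have := ((intA i).sub (intB i))
        have heq : (fun x => h x * (pderiv2 P i i x
            - pderiv' (fun y => P y * pderiv' (fun z => Real.log (π z)) i y) i x))
            = fun x => pderiv2 P i i x * h x
              - pderiv' (fun y => P y * pderiv' (fun z => Real.log (π z)) i y) i x * h x := by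
          funext x; ring
        rw [heq]; exact this
    have intSum : ∀ i : Fin d, MeasureTheory.Integrable
        (fun x => pderiv' h i x * (P x * pderiv' (fun z => Real.log (π z)) i x)
          + pderiv2 h i i x * P x) := fun i => (int1 i).add (int2 i)
    have key_i : ∀ i : Fin d,
        ∫ x, (pderiv' h i x * (P x * pderiv' (fun z => Real.log (π z)) i x)
          + pderiv2 h i i x * P x)
        = ∫ x, h x * (pderiv2 P i i x
            - pderiv' (fun y => P y * pderiv' (fun z => Real.log (π z)) i y) i x) := by
      intro i
      have A1 : ∫ x, pderiv' h i x * (P x * pderiv' (fun z => Real.log (π z)) i x)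
          = - ∫ x, pderiv' (fun y => P y * pderiv' (fun z => Real.log (π z)) i y) i x * h x :=
        ibp' hh hch (hPsm.mul (contDiff_pderiv' hLπ i)) i
      have B1 : ∫ x, pderiv2 h i i x * P x
          = - ∫ x, pderiv' P i x * pderiv' h i x :=
        ibp' (contDiff_pderiv' hh i) (hcs_pderiv' hch i) hPsm i
      have B2 : ∫ x, pderiv2 P i i x * h x
          = - ∫ x, pderiv' h i x * pderiv' P i x :=
        ibp hh hch (contDiff_pderiv' hPsm i) i
      have A2 : ∫ x, pderiv2 h i i x * P x = ∫ x, pderiv2 P i i x * h x := by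
        rw [B1, B2, neg_inj]
        congr 1
        funext x
        ring
      have split : ∫ x, h x * (pderiv2 P i i x
            - pderiv' (fun y => P y * pderiv' (fun z => Real.log (π z)) i y) i x)
          = (∫ x, pderiv2 P i i x * h x)
            - ∫ x, pderiv' (fun y => P y * pderiv' (fun z => Real.log (π z)) i y) i x * h x := by
        rw [← MeasureTheory.integral_sub (intA i) (intB i)]
        congr 1; funext x; ring
      rw [MeasureTheory.integral_add (int1 i) (int2 i), A1, A2, split]
      ring
    have s1 : ∫ x, genL π h x * P x
        = ∑ i, ∫ x, (pderiv' h i x * (P x * pderiv' (fun z => Real.log (π z)) i x)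
            + pderiv2 h i i x * P x) := by
      rw [← MeasureTheory.integral_finset_sum _ fun i _ => intSum i]
      congr 1; funext x
      simp only [genL, Gamma1, lap]
      rw [add_mul, Finset.sum_mul, Finset.sum_mul, ← Finset.sum_add_distrib]
      exact Finset.sum_congr rfl fun i _ => by ring
    rw [s1, Finset.sum_congr rfl fun i _ => key_i i,
      ← MeasureTheory.integral_finset_sum _ fun i _ => intH i]
    congr 1; funext x
    rw [← Finset.mul_sum]
    congr 1
    simp only [Ltilstar, lap]
    rw [Finset.sum_sub_distrib]
    ring
  -- Γ₁-adjoint identity : ∫ Γ₁(g,f)·P = −∫ g·(L̃*P) for compactly supported smooth g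
  have gadj : ∀ g : EuclideanSpace ℝ (Fin d) → ℝ, ContDiff ℝ (⊤:ℕ∞) g → HasCompactSupport g →
      ∫ x, Gamma1 g f x * P x = - ∫ x, g x * Ltilstar π P x := by
    intro g hg hcg
    have intI : ∀ i : Fin d, MeasureTheory.Integrable
        (fun x => pderiv' (fun y => P y * pderiv' f i y) i x * g x) :=
      fun i => integ_mul' (contDiff_pderiv' (hPsm.mul (contDiff_pderiv' hf i)) i).continuous
        hg.continuous hcg
    have s1 : ∫ x, Gamma1 g f x * P x
        = ∑ i, ∫ x, pderiv' g i x * (P x * pderiv' f i x) := by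
      rw [← MeasureTheory.integral_finset_sum _ fun i _ =>
        integ_mul (b := fun x => P x * pderiv' f i x) (contDiff_pderiv' hg i).continuous
          (hPsm.continuous.mul (contDiff_pderiv' hf i).continuous) (hcs_pderiv' hcg i)]
      congr 1; funext x
      simp only [Gamma1]
      rw [Finset.sum_mul]
      exact Finset.sum_congr rfl fun i _ => by ring
    have s2 : ∀ i : Fin d, ∫ x, pderiv' g i x * (P x * pderiv' f i x)
        = - ∫ x, pderiv' (fun y => P y * pderiv' f i y) i x * g x :=
      fun i => ibp' hg hcg (hPsm.mul (contDiff_pderiv' hf i)) i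
    rw [s1, Finset.sum_congr rfl fun i _ => s2 i, Finset.sum_neg_distrib, neg_inj,
      ← MeasureTheory.integral_finset_sum _ fun i _ => intI i]
    congr 1; funext x
    rw [← Finset.sum_mul, ← lemA x]
    ring
  -- compact support of genL π (Γ₁ f f) and of Γ₁(L̃f, f)
  have hLGcs : HasCompactSupport (fun x => genL π (fun y => Gamma1 f f y) x) :=
    HasCompactSupport.intro hGcs fun x hx => by
      show (∑ i, pderiv' (fun y => Real.log (π y)) i x
          * pderiv' (fun y => Gamma1 f f y) i x)
        + ∑ i, pderiv2 (fun y => Gamma1 f f y) i i x = 0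
      have h1 : ∀ i : Fin d, pderiv' (fun y => Gamma1 f f y) i x = 0 :=
        fun i => pderiv'_eq_zero_of_nmem hx i
      have h2 : ∀ i : Fin d, pderiv2 (fun y => Gamma1 f f y) i i x = 0 :=
        fun i => pderiv2_eq_zero_of_nmem hx i i
      simp [h1, h2]
  have hΓcs : HasCompactSupport (fun x => Gamma1 (fun y => genL π f y) f x) :=
    HasCompactSupport.intro hfc fun x hx => by
      simp [Gamma1, pderiv'_eq_zero_of_nmem hx]
  have int1 : MeasureTheory.Integrable (fun x => genL π (fun y => Gamma1 f f y) x * P x) :=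
    integ_mul (contDiff_genL hπ hπpos hGsm).continuous hPsm.continuous hLGcs
  have int2 : MeasureTheory.Integrable (fun x => Gamma1 (fun y => genL π f y) f x * P x) :=
    integ_mul (contDiff_gamma1 hLfsm hf).continuous hPsm.continuous hΓcs
  have hA : ∫ x, genL π (fun y => Gamma1 f f y) x * P x
      = ∫ x, Gamma1 f f x * Ltilstar π P x := adj _ hGsm hGcs
  have hB : ∫ x, Gamma1 (fun y => genL π f y) f x * P x
      = - ∫ x, genL π f x * Ltilstar π P x := gadj _ hLfsm hLfcs
  calc ∫ x, Gamma2 π f x * P x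
      = ∫ x, ((1/2:ℝ) * (genL π (fun y => Gamma1 f f y) x * P x)
          - Gamma1 (fun y => genL π f y) f x * P x) := by
        congr 1; funext x
        simp only [Gamma2]
        ring
    _ = ((1/2:ℝ) * ∫ x, genL π (fun y => Gamma1 f f y) x * P x)
          - ∫ x, Gamma1 (fun y => genL π f y) f x * P x := by
        rw [MeasureTheory.integral_sub (int1.const_mul _) int2,
          MeasureTheory.integral_const_mul]
    _ = (∫ x, genL π f x * Ltilstar π P x)
          + (1/2:ℝ) * ∫ x, Gamma1 f f x * Ltilstar π P x := by
        rw [hA, hB]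
        ring

end
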